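/- With n, w, a, b, φ, and u_i = φ^i(0) as above, every point x of the simplex conv{u_0, u_1, …, u_n} (the standard Q_n(w)) satisfies x_1 ≥ x_2 ≥ ⋯ ≥ x_n ≥ x_1 - (a-b). Moreover, the set Ω = {x ∈ ℝ^n : x_1 ≥ x_2 ≥ ⋯ ≥ x_n ≥ x_1 - (a-b)} is invariant under φ. -/

import Mathlib

theorem schobi_prism_inequalities_and_invariance
    (n : ℕ) (hn : 2 ≤ n) (w : ℝ) (hw1 : -1 < w) (hw2 : w < 1 / ((n : ℝ) - 1))
    (b a : ℝ)
    (hb : b = (Real.sqrt (1 - w * ((n : ℝ) - 1)) - Real.sqrt (1 + w)) / n)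
    (ha : a = b + Real.sqrt (1 + w))
    (φ : EuclideanSpace ℝ (Fin n) → EuclideanSpace ℝ (Fin n))
    (hφ : ∀ (x : EuclideanSpace ℝ (Fin n)) (i : Fin n),
      φ x i =
        if h : (i : ℕ) = 0 then x ⟨n - 1, by omega⟩ + a
        else x ⟨(i : ℕ) - 1, by omega⟩ + b)
    (v : Fin n → Fin n → ℝ)
    (hv : ∀ i j, v i j = if i = j then a else b)
    (Q : Set (EuclideanSpace ℝ (Fin n)))
    (hQ : Q = convexHull ℝ (insert (0 : EuclideanSpace ℝ (Fin n))
      (Set.range (fun i : Fin n =>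
        (WithLp.toLp 2 (fun j => ∑ k ∈ Finset.Iic i, v k j) : EuclideanSpace ℝ (Fin n))))))
    (Ω : Set (EuclideanSpace ℝ (Fin n)))
    (hΩ : Ω = {x : EuclideanSpace ℝ (Fin n) |
      (∀ i j : Fin n, i ≤ j → x j ≤ x i) ∧ x ⟨0, by omega⟩ - (a - b) ≤ x ⟨n - 1, by omega⟩}) :
    (∀ x ∈ Q, (∀ i j : Fin n, i ≤ j → x j ≤ x i) ∧
      x ⟨0, by omega⟩ - (a - b) ≤ x ⟨n - 1, by omega⟩) ∧
    φ '' Ω = Ω := by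
  have hab : a - b = Real.sqrt (1 + w) := by rw [ha]; ring
  have hab0 : 0 ≤ a - b := hab ▸ Real.sqrt_nonneg _
  have h0 : 0 < n := by omega
  set S : Set (EuclideanSpace ℝ (Fin n)) :=
    {x : EuclideanSpace ℝ (Fin n) |
      (∀ i j : Fin n, i ≤ j → x j ≤ x i) ∧ x ⟨0, h0⟩ - (a - b) ≤ x ⟨n - 1, by omega⟩}
    with hS
  have hconv : Convex ℝ S := by
    intro x hx y hy s t hs ht hst
    obtain ⟨hx1, hx2⟩ := hx
    obtain ⟨hy1, hy2⟩ := hy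
    constructor
    · intro i j hij
      have h1 := mul_le_mul_of_nonneg_left (hx1 i j hij) hs
      have h2 := mul_le_mul_of_nonneg_left (hy1 i j hij) ht
      simp only [PiLp.add_apply, PiLp.smul_apply, smul_eq_mul]
      linarith
    · have h1 := mul_le_mul_of_nonneg_left hx2 hs
      have h2 := mul_le_mul_of_nonneg_left hy2 ht
      simp only [PiLp.add_apply, PiLp.smul_apply, smul_eq_mul]
      nlinarith
  have hsum : ∀ (i j : Fin n), (∑ k ∈ Finset.Iic i, v k j)
      = ((i : ℕ) + 1) * b + (if j ≤ i then a - b else 0) := by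
    intro i j
    have h1 : ∀ k : Fin n, v k j = b + (if k = j then a - b else 0) := by
      intro k; rw [hv]; split_ifs <;> ring
    rw [Finset.sum_congr rfl (fun k _ => h1 k), Finset.sum_add_distrib,
      Finset.sum_const, Finset.sum_ite_eq', Fin.card_Iic]
    simp only [Finset.mem_Iic, nsmul_eq_mul]
    push_cast
    ring
  have hQS : Q ⊆ S := by
    rw [hQ]
    apply convexHull_min _ hconv
    rw [Set.insert_subset_iff]
    constructor
    · constructor
      · intro i j _; simp
      · simp
        linarith
    · rw [Set.range_subset_iff]
      intro i
      constructor
      · intro p q hpq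
        show (∑ k ∈ Finset.Iic i, v k q) ≤ (∑ k ∈ Finset.Iic i, v k p)
        rw [hsum, hsum]
        have : q ≤ i → p ≤ i := fun h => le_trans hpq h
        split_ifs with h1 h2 h2 <;> first | linarith | (exact absurd (this h1) h2)
      · show (∑ k ∈ Finset.Iic i, v k ⟨0, h0⟩) - (a - b) ≤ (∑ k ∈ Finset.Iic i, v k ⟨n-1, by omega⟩)
        rw [hsum, hsum]
        have h01 : (⟨0, h0⟩ : Fin n) ≤ i := by simp [Fin.le_def]
        rw [if_pos h01]
        split_ifs <;> linarith
  refine ⟨fun x hx => hQS hx, ?_⟩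
  rw [hΩ]
  apply Set.Subset.antisymm
  · rintro _ ⟨x, hxS, rfl⟩
    rw [hS] at hxS ⊢
    obtain ⟨hx1, hx2⟩ := hxS
    constructor
    · intro i j hij
      rw [hφ, hφ]
      rcases Nat.eq_zero_or_pos (i : ℕ) with hi | hi
      · rw [dif_pos hi]
        rcases Nat.eq_zero_or_pos (j : ℕ) with hj | hj
        · rw [dif_pos hj]
        · rw [dif_neg (by omega)]
          have h1 : x ⟨(j : ℕ) - 1, by omega⟩ ≤ x ⟨0, h0⟩ :=
            hx1 _ _ (by simp [Fin.le_def])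
          linarith
      · have hj : 0 < (j : ℕ) := lt_of_lt_of_le hi hij
        rw [dif_neg (by omega), dif_neg (by omega)]
        have h1 : x ⟨(j : ℕ) - 1, by omega⟩ ≤ x ⟨(i : ℕ) - 1, by omega⟩ :=
          hx1 _ _ (by simp only [Fin.mk_le_mk]; omega)
        linarith
    · rw [hφ, hφ]
      rw [dif_pos rfl, dif_neg (by simp; omega)]
      have h1 : x ⟨n - 1, by omega⟩ ≤ x ⟨n - 1 - 1, by omega⟩ :=
        hx1 _ _ (by simp only [Fin.mk_le_mk]; omega)
      linarith
  · intro y hyS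
    rw [hS] at hyS
    obtain ⟨hy1, hy2⟩ := hyS
    set x : EuclideanSpace ℝ (Fin n) := WithLp.toLp 2 (fun i : Fin n =>
      if h : (i : ℕ) + 1 < n then y ⟨(i : ℕ) + 1, h⟩ - b else y ⟨0, h0⟩ - a) with hx
    have hxi : ∀ (i : Fin n) (h : (i : ℕ) + 1 < n), x i = y ⟨(i : ℕ) + 1, h⟩ - b := by
      intro i h; rw [hx]; exact dif_pos h
    have hxl : ∀ (i : Fin n), ¬ ((i : ℕ) + 1 < n) → x i = y ⟨0, h0⟩ - a := by
      intro i h; rw [hx]; exact dif_neg h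
    refine ⟨x, ?_, ?_⟩
    · rw [hS]
      refine ⟨?_, ?_⟩
      swap
      · rw [hxi ⟨0, h0⟩ (by simp; omega), hxl ⟨n - 1, by omega⟩ (by simp; omega)]
        have h1 : y ⟨0 + 1, by omega⟩ ≤ y ⟨0, h0⟩ := hy1 _ _ (by simp [Fin.le_def])
        linarith
      intro i j hij
      by_cases hi : (i : ℕ) + 1 < n
      · by_cases hj : (j : ℕ) + 1 < n
        · rw [hxi i hi, hxi j hj]
          have h1 : y ⟨(j : ℕ) + 1, hj⟩ ≤ y ⟨(i : ℕ) + 1, hi⟩ :=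
            hy1 _ _ (by simp only [Fin.mk_le_mk]; omega)
          linarith
        · rw [hxi i hi, hxl j hj]
          have h1 : y ⟨n - 1, by omega⟩ ≤ y ⟨(i : ℕ) + 1, hi⟩ :=
            hy1 _ _ (by simp only [Fin.mk_le_mk]; omega)
          linarith
      · have hj : ¬ ((j : ℕ) + 1 < n) := by
          have := j.isLt; have := i.isLt; have := hij; simp only [Fin.le_def] at this; omega
        rw [hxl i hi, hxl j hj]
    · ext i
      rw [hφ]
      rcases Nat.eq_zero_or_pos (i : ℕ) with hi | hi
      · rw [dif_pos hi, hxl ⟨n - 1, by omega⟩ (by simp; omega)]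
        have : i = ⟨0, h0⟩ := Fin.ext hi
        rw [this]; ring
      · rw [dif_neg (by omega), hxi ⟨(i : ℕ) - 1, by omega⟩ (by simp; omega)]
        have : (⟨(i : ℕ) - 1 + 1, by omega⟩ : Fin n) = i := Fin.ext (by simp; omega)
        rw [this]; ring
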